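/- If a word α of length at least 2 has a renovation event at some position n ≥ 2 (meaning α_{n+k} ≤ k+1 for all 0 ≤ k ≤ L(α)−n), then ε_X(α) = 0 for every admissible configuration X. -/

import Mathlib

open scoped Classical

/-- A configuration of the infinite-bin model: number of balls in each bin. -/
abbrev Config := ℤ → ℕ∞

/-- Admissible configuration: nonempty bins form a semi-infinite interval, and
every bin to the left of an infinite bin is infinite. -/
def IsAdmissible (X : Config) : Prop :=
  (∃ m : ℤ, ∀ j : ℤ, X j ≠ 0 ↔ j ≤ m) ∧ ∀ j : ℤ, X j = ⊤ → X (j - 1) = ⊤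

/-- N(X,k): number of balls in bins of index ≥ k. -/
noncomputable def Nballs (X : Config) (k : ℤ) : ℕ∞ := ∑' j : {j : ℤ // k ≤ j}, X j

/-- B(X,ξ): leftmost position such that there are fewer than ξ balls to its right. -/
noncomputable def Bpos (X : Config) (ξ : ℕ) : ℤ := sInf {j : ℤ | Nballs X j < (ξ : ℕ∞)}

/-- The move of type ξ: add one ball in the bin of index B(X,ξ). -/
noncomputable def Phi (ξ : ℕ) (X : Config) : Config :=
  fun j => X j + (if j = Bpos X ξ then 1 else 0)

/-- The move of type ξ ∈ ℕ ∪ {∞}, with Φ_∞ = id. -/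
noncomputable def PhiE (ξ : ℕ∞) (X : Config) : Config :=
  if ξ = ⊤ then X else Phi ξ.toNat X

/-- The shift operator τ. -/
def shift (X : Config) : Config := fun j => X (j - 1)

/-- Configuration obtained after applying successively the moves listed in α. -/
noncomputable def applyWord (X : Config) (α : List ℕ) : Config :=
  α.foldl (fun Y a => Phi a Y) X

/-- d_X(α): displacement of the front after performing the word α. -/
noncomputable def dX (X : Config) (α : List ℕ) : ℤ :=
  Bpos (applyWord X α) 1 - Bpos X 1

/-- α ∈ P_X : α is nonempty and its last move places a ball in a previously empty bin. -/
def inP (X : Config) (α : List ℕ) : Prop :=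
  ∃ β a, α = β ++ [a] ∧ applyWord X β (Bpos (applyWord X β) a) = 0

/-- ε_X(α) = 1_{α ∈ P_X} - 1_{ϖα ∈ P_X}. -/
noncomputable def eps (X : Config) (α : List ℕ) : ℤ :=
  (if inP X α then 1 else 0) - (if inP X α.tail then 1 else 0)

lemma enat_summable {ι : Type*} (f : ι → ℕ∞) : Summable f :=
  ⟨_, hasSum_of_isLUB _ (isLUB_sSup (Set.range fun s => ∑ i ∈ s, f i))⟩

/-- Front of a configuration. -/
def Front (Z : Config) (m : ℤ) : Prop := ∀ j : ℤ, Z j ≠ 0 ↔ j ≤ m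

lemma Nballs_antitone (Z : Config) {j j' : ℤ} (h : j ≤ j') : Nballs Z j' ≤ Nballs Z j := by
  refine Summable.tsum_le_tsum_of_inj (fun x => ⟨x.1, h.trans x.2⟩) ?_ (fun c _ => zero_le)
    (fun b => le_rfl) (enat_summable _) (enat_summable _)
  intro x y hxy
  exact Subtype.ext (by simpa using congrArg Subtype.val hxy)

lemma Nballs_eq_zero {Z : Config} {j : ℤ} (h : ∀ i : ℤ, j ≤ i → Z i = 0) : Nballs Z j = 0 :=
  (Summable.tsum_eq_zero_iff (enat_summable _)).2 fun x => h x.1 x.2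

lemma le_Nballs {Z : Config} {j i : ℤ} (h : j ≤ i) : Z i ≤ Nballs Z j :=
  Summable.le_tsum' (enat_summable fun x : {x : ℤ // j ≤ x} => Z x.1) ⟨i, h⟩

lemma Nballs_lower {Z : Config} {m : ℤ} (hm : Front Z m) {j : ℤ} (hj : j ≤ m) :
    ((m + 1 - j).toNat : ℕ∞) ≤ Nballs Z j := by
  classical
  set s : Finset {i : ℤ // j ≤ i} :=
    (Finset.Icc j m).attach.map
      ⟨fun x => ⟨x.1, (Finset.mem_Icc.mp x.2).1⟩, by
        intro x y hxy
        exact Subtype.ext (by simpa using congrArg Subtype.val hxy)⟩ with hs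
  have hcard : s.card = (m + 1 - j).toNat := by
    simp [hs, Int.card_Icc]
  have h1 : ∀ x ∈ s, (1 : ℕ∞) ≤ Z x.1 := by
    intro x hx
    simp only [hs, Finset.mem_map, Finset.mem_attach, true_and, Function.Embedding.coeFn_mk] at hx
    obtain ⟨y, hy⟩ := hx
    have hym : y.1 ≤ m := (Finset.mem_Icc.mp y.2).2
    rw [ENat.one_le_iff_ne_zero, ← hy]
    exact (hm _).mpr hym
  calc ((m + 1 - j).toNat : ℕ∞) = s.card • (1 : ℕ∞) := by simp [hcard]
    _ ≤ ∑ x ∈ s, Z x.1 := Finset.card_nsmul_le_sum s _ _ h1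
    _ ≤ Nballs Z j := Summable.sum_le_tsum s (fun i _ => zero_le) (enat_summable _)

lemma Nballs_shift {Z Z' : Config} {c j : ℤ} (h : ∀ i : ℤ, j ≤ i → Z (c + i) = Z' i) :
    Nballs Z (c + j) = Nballs Z' j := by
  rw [Nballs, Nballs, ← Equiv.tsum_eq
    (⟨fun x => ⟨c + x.1, by omega⟩, fun y => ⟨y.1 - c, by omega⟩,
      fun x => Subtype.ext (by simp), fun y => Subtype.ext (by simp)⟩ :
      {i : ℤ // j ≤ i} ≃ {i : ℤ // c + j ≤ i}) (fun y => Z y.1)]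
  exact tsum_congr fun x => h x.1 x.2

lemma Nballs_phi (Z : Config) (b : ℤ) (j : ℤ) :
    Nballs (fun i => Z i + (if i = b then 1 else 0)) j
      = Nballs Z j + (if j ≤ b then 1 else 0) := by
  rw [Nballs, Summable.tsum_add (enat_summable _) (enat_summable _)]
  congr 1
  by_cases hb : j ≤ b
  · rw [if_pos hb]
    rw [tsum_eq_single (⟨b, hb⟩ : {i : ℤ // j ≤ i})]
    · simp
    · intro x hx
      have : x.1 ≠ b := fun h => hx (Subtype.ext h)
      simp [this]
  · rw [if_neg hb]
    refine (Summable.tsum_eq_zero_iff (enat_summable _)).2 fun x => ?_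
    have : x.1 ≠ b := by omega
    simp [this]

lemma front_zero {Z : Config} {m : ℤ} (hm : Front Z m) {j : ℤ} (h : m < j) : Z j = 0 := by
  by_contra hc
  exact absurd ((hm j).mp hc) (by omega)

/-- The set defining `Bpos`. -/
lemma Bpos_set_mem {Z : Config} {m : ℤ} (hm : Front Z m) {a : ℕ} (ha : 1 ≤ a) :
    m + 1 ∈ {j : ℤ | Nballs Z j < (a : ℕ∞)} := by
  have h0 : Nballs Z (m + 1) = 0 := Nballs_eq_zero fun i hi => front_zero hm (by omega)
  simp only [Set.mem_setOf_eq, h0]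
  exact_mod_cast Nat.pos_of_ne_zero (by omega)

lemma Bpos_set_bdd {Z : Config} {m : ℤ} (hm : Front Z m) {a : ℕ} (ha : 1 ≤ a) :
    {j : ℤ | Nballs Z j < (a : ℕ∞)} ⊆ Set.Ici (m + 2 - (a : ℤ)) := by
  intro j hj
  simp only [Set.mem_setOf_eq] at hj
  by_contra hc
  simp only [Set.mem_Ici, not_le] at hc
  have hjm : j ≤ m := by omega
  have := Nballs_lower hm hjm
  have hle : (a : ℕ∞) ≤ ((m + 1 - j).toNat : ℕ∞) := by
    have : (a : ℤ) ≤ m + 1 - j := by omega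
    exact_mod_cast (by omega : a ≤ (m + 1 - j).toNat)
  exact absurd hj (not_lt.mpr (hle.trans this))

lemma Nballs_Bpos_lt {Z : Config} {m : ℤ} (hm : Front Z m) {a : ℕ} (ha : 1 ≤ a) :
    Nballs Z (Bpos Z a) < (a : ℕ∞) :=
  Int.csInf_mem ⟨m + 1, Bpos_set_mem hm ha⟩
    (⟨m + 2 - (a : ℤ), fun _ hj => Bpos_set_bdd hm ha hj⟩)

lemma Bpos_le {Z : Config} {m : ℤ} (hm : Front Z m) {a : ℕ} (ha : 1 ≤ a) :
    Bpos Z a ≤ m + 1 :=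
  csInf_le ⟨m + 2 - (a : ℤ), fun _ hj => Bpos_set_bdd hm ha hj⟩ (Bpos_set_mem hm ha)

lemma le_Nballs_of_lt_Bpos {Z : Config} {m : ℤ} (hm : Front Z m) {a : ℕ} (ha : 1 ≤ a) {j : ℤ}
    (h : j < Bpos Z a) : (a : ℕ∞) ≤ Nballs Z j := by
  have := notMem_of_lt_csInf h ⟨m + 2 - (a : ℤ), fun _ hj => Bpos_set_bdd hm ha hj⟩
  simpa only [Set.mem_setOf_eq, not_lt] using this

lemma phi_apply (a : ℕ) (Z : Config) (j : ℤ) :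
    Phi a Z j = Z j + (if j = Bpos Z a then 1 else 0) := rfl

lemma front_phi {Z : Config} {m : ℤ} (hm : Front Z m) {a : ℕ} (ha : 1 ≤ a) :
    Front (Phi a Z) (max m (Bpos Z a)) := by
  intro j
  have hB := Bpos_le hm ha
  have key : Phi a Z j ≠ 0 ↔ (Z j ≠ 0 ∨ j = Bpos Z a) := by
    rw [phi_apply]
    by_cases hj : j = Bpos Z a
    · simp [hj, add_eq_zero]
    · simp [hj]
  rw [key]
  have hmj := hm j
  rcases le_or_gt (Bpos Z a) m with h | h
  · rw [max_eq_left h]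
    constructor
    · rintro (h1 | h1)
      · exact hmj.mp h1
      · omega
    · exact fun h1 => Or.inl (hmj.mpr h1)
  · rw [max_eq_right h.le]
    constructor
    · rintro (h1 | h1)
      · have := hmj.mp h1; omega
      · omega
    · intro h1
      by_cases h2 : j ≤ m
      · exact Or.inl (hmj.mpr h2)
      · exact Or.inr (by omega)

lemma top_phi {Z : Config} {a : ℕ} {j : ℤ} :
    Phi a Z j = ⊤ ↔ Z j = ⊤ := by
  rw [phi_apply, ENat.add_eq_top]
  constructor
  · rintro (h | h)
    · exact h
    · by_cases hj : j = Bpos Z a <;> simp [hj] at h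
  · exact Or.inl

lemma isAdmissible_phi {Z : Config} (hZ : IsAdmissible Z) {a : ℕ} (ha : 1 ≤ a) :
    IsAdmissible (Phi a Z) := by
  obtain ⟨⟨m, hm⟩, htop⟩ := hZ
  exact ⟨⟨max m (Bpos Z a), front_phi hm ha⟩,
    fun j hj => top_phi.mpr (htop j (top_phi.mp hj))⟩

lemma applyWord_cons (X : Config) (a : ℕ) (α : List ℕ) :
    applyWord X (a :: α) = applyWord (Phi a X) α := rfl

lemma applyWord_append (X : Config) (α β : List ℕ) :
    applyWord X (α ++ β) = applyWord (applyWord X α) β := by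
  simp [applyWord, List.foldl_append]

lemma applyWord_concat (X : Config) (α : List ℕ) (a : ℕ) :
    applyWord X (α ++ [a]) = Phi a (applyWord X α) := by
  rw [applyWord_append]; rfl

lemma isAdmissible_applyWord {X : Config} (hX : IsAdmissible X) {α : List ℕ}
    (hα : ∀ a ∈ α, 1 ≤ a) : IsAdmissible (applyWord X α) := by
  induction α generalizing X with
  | nil => exact hX
  | cons a α ih =>
    rw [applyWord_cons]
    exact ih (isAdmissible_phi hX (hα a (by simp))) fun b hb => hα b (by simp [hb])

lemma le_applyWord (X : Config) (α : List ℕ) (j : ℤ) : X j ≤ applyWord X α j := by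
  induction α generalizing X with
  | nil => exact le_rfl
  | cons a α ih =>
    rw [applyWord_cons]
    exact le_trans (le_self_add) (ih (Phi a X))

/-- The canonical reference configuration. -/
noncomputable def Cfg0 : Config := fun j => if j ≤ 0 then ⊤ else 0

lemma front_Cfg0 : Front Cfg0 0 := by
  intro j
  by_cases h : j ≤ 0 <;> simp [Cfg0, h]

lemma isAdmissible_Cfg0 : IsAdmissible Cfg0 := by
  refine ⟨⟨0, front_Cfg0⟩, fun j hj => ?_⟩
  simp only [Cfg0] at hj ⊢
  by_cases h : j ≤ 0
  · simp [show j - 1 ≤ 0 by omega]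
  · simp [h] at hj

lemma applyWord_Cfg0_top (β : List ℕ) : applyWord Cfg0 β 0 = ⊤ := by
  have := le_applyWord Cfg0 β 0
  simp only [Cfg0, le_refl, if_true] at this
  exact top_le_iff.mp this

lemma bpos_glue {Z W V : Config} {m : ℤ} (hm : Front Z m)
    (hV : IsAdmissible V) (hVtop : V 0 = ⊤)
    (h1 : ∀ i : ℤ, W i = if i ≤ m then Z i else V (i - m))
    {L : ℕ} (h2 : ∀ j : ℤ, j ≤ m + 1 → Nballs W j = Nballs Z j + (L : ℕ∞))
    {a : ℕ} (ha1 : 1 ≤ a) (haL : a ≤ L + 1) :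
    1 ≤ Bpos V a ∧ Bpos W a = m + Bpos V a := by
  obtain ⟨⟨mV, hmV⟩, -⟩ := hV
  -- members of the V-set are ≥ 1
  have hSV : ∀ i : ℤ, Nballs V i < (a : ℕ∞) → 1 ≤ i := by
    intro i hi
    by_contra hc
    have : (⊤ : ℕ∞) ≤ Nballs V i := hVtop ▸ le_Nballs (by omega)
    exact absurd hi (not_lt.mpr ((le_top).trans this))
  have hSVne : {i : ℤ | Nballs V i < (a : ℕ∞)}.Nonempty := ⟨mV + 1, Bpos_set_mem hmV ha1⟩
  have hb1 : 1 ≤ Bpos V a := le_csInf hSVne fun i hi => hSV i hi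
  have hbdd : BddBelow {i : ℤ | Nballs V i < (a : ℕ∞)} :=
    ⟨1, fun i hi => hSV i hi⟩
  -- N match beyond the front
  have hNmatch : ∀ j : ℤ, 1 ≤ j → Nballs W (m + j) = Nballs V j := by
    intro j hj
    refine Nballs_shift fun i hi => ?_
    rw [h1 (m + i), if_neg (by omega)]
    congr 1
    omega
  -- left of the front, many balls
  have hbig : ∀ j : ℤ, j ≤ m → ¬ Nballs W j < (a : ℕ∞) := by
    intro j hj
    rw [h2 j (by omega), not_lt]
    have hcast : (a : ℕ∞) ≤ 1 + (L : ℕ∞) := by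
      exact_mod_cast (by omega : a ≤ 1 + L)
    refine hcast.trans (add_le_add ?_ le_rfl)
    have := Nballs_lower hm hj
    exact le_trans (by exact_mod_cast (by omega : 1 ≤ (m + 1 - j).toNat)) this
  -- membership
  have hmem : Nballs W (m + Bpos V a) < (a : ℕ∞) := by
    rw [hNmatch _ hb1]
    exact Nballs_Bpos_lt hmV ha1
  have hlow : ∀ j : ℤ, Nballs W j < (a : ℕ∞) → m + Bpos V a ≤ j := by
    intro j hj
    have hjm : m + 1 ≤ j := by
      by_contra hc
      exact hbig j (by omega) hj
    have : Nballs V (j - m) < (a : ℕ∞) := by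
      rw [← hNmatch (j - m) (by omega)]
      rw [show m + (j - m) = j by omega]
      exact hj
    have hle : Bpos V a ≤ j - m := csInf_le hbdd this
    omega
  refine ⟨hb1, le_antisymm (csInf_le ⟨m + 1, fun j hj => ?_⟩ hmem) (le_csInf ⟨_, hmem⟩ hlow)⟩
  by_contra hc
  exact hbig j (by omega) hj

lemma applyWord_glue {Z : Config} {m : ℤ} (hm : Front Z m)
    (β : List ℕ) (hβ1 : ∀ a ∈ β, 1 ≤ a)
    (hβ2 : ∀ k : ℕ, k < β.length → β.getD k 0 ≤ k + 1) :
    (∀ i : ℤ, applyWord Z β i = if i ≤ m then Z i else applyWord Cfg0 β (i - m)) ∧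
    (∀ j : ℤ, j ≤ m + 1 → Nballs (applyWord Z β) j = Nballs Z j + (β.length : ℕ∞)) := by
  induction β using List.reverseRecOn with
  | nil =>
    constructor
    · intro i
      by_cases h : i ≤ m
      · simp [applyWord, h]
      · simp only [applyWord, List.foldl_nil, if_neg h]
        rw [front_zero hm (by omega)]
        simp only [Cfg0]
        rw [if_neg (by omega)]
    · intro j _
      simp [applyWord]
  | append_singleton β a ih =>
    have hgetD : ∀ k, k < β.length → (β ++ [a]).getD k 0 = β.getD k 0 := by
      intro k hk
      rw [List.getD_eq_getElem?_getD, List.getD_eq_getElem?_getD,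
        List.getElem?_append_left hk]
    have hβ1' : ∀ b ∈ β, 1 ≤ b := fun b hb => hβ1 b (by simp [hb])
    have hβ2' : ∀ k : ℕ, k < β.length → β.getD k 0 ≤ k + 1 := by
      intro k hk
      rw [← hgetD k hk]
      exact hβ2 k (by simp; omega)
    have ha1 : 1 ≤ a := hβ1 a (by simp)
    have haL : a ≤ β.length + 1 := by
      have := hβ2 β.length (by simp)
      rwa [List.getD_eq_getElem?_getD, List.getElem?_concat_length] at this
    obtain ⟨ih1, ih2⟩ := ih hβ1' hβ2'
    have hVadm : IsAdmissible (applyWord Cfg0 β) :=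
      isAdmissible_applyWord isAdmissible_Cfg0 hβ1'
    obtain ⟨hb1, hBW⟩ := bpos_glue hm hVadm (applyWord_Cfg0_top β) ih1 ih2 ha1 haL
    have hphiW : applyWord Z (β ++ [a]) = Phi a (applyWord Z β) := applyWord_concat _ _ _
    have hphiV : applyWord Cfg0 (β ++ [a]) = Phi a (applyWord Cfg0 β) := applyWord_concat _ _ _
    constructor
    · intro i
      rw [hphiW, hphiV, phi_apply, ih1 i]
      by_cases h : i ≤ m
      · rw [if_pos h, if_pos h, if_neg (by omega), add_zero]
      · rw [if_neg h, if_neg h, phi_apply]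
        congr 1
        rw [hBW]
        by_cases h2 : i = m + Bpos (applyWord Cfg0 β) a
        · rw [if_pos h2, if_pos (by omega)]
        · rw [if_neg h2, if_neg (by omega)]
    · intro j hj
      rw [hphiW]
      have : Nballs (Phi a (applyWord Z β)) j
          = Nballs (applyWord Z β) j + (if j ≤ Bpos (applyWord Z β) a then 1 else 0) :=
        Nballs_phi _ _ _
      rw [this, if_pos (by rw [hBW]; omega), ih2 j hj, List.length_append]
      simp only [List.length_singleton]
      push_cast
      ring

lemma inP_concat_iff (X : Config) (γ : List ℕ) (a : ℕ) :
    inP X (γ ++ [a]) ↔ applyWord X γ (Bpos (applyWord X γ) a) = 0 := by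
  constructor
  · rintro ⟨β, b, hb, hcond⟩
    obtain ⟨h1, h2⟩ := List.append_inj' hb rfl
    obtain rfl : γ = β := h1
    obtain rfl : a = b := by injection h2
    exact hcond
  · intro h
    exact ⟨γ, a, rfl, h⟩

lemma inP_renov {X : Config} (hX : IsAdmissible X) (δ β' : List ℕ) (a' : ℕ)
    (hδ : ∀ b ∈ δ, 1 ≤ b) (hβ'1 : ∀ b ∈ β', 1 ≤ b)
    (hβ'2 : ∀ k : ℕ, k < β'.length → β'.getD k 0 ≤ k + 1)
    (ha1 : 1 ≤ a') (haL : a' ≤ β'.length + 1) :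
    inP X (δ ++ (β' ++ [a'])) ↔
      applyWord Cfg0 β' (Bpos (applyWord Cfg0 β') a') = 0 := by
  rw [show δ ++ (β' ++ [a']) = (δ ++ β') ++ [a'] by simp, inP_concat_iff,
    applyWord_append]
  have hZadm : IsAdmissible (applyWord X δ) := isAdmissible_applyWord hX hδ
  obtain ⟨⟨m, hm⟩, -⟩ := hZadm
  obtain ⟨h1, h2⟩ := applyWord_glue hm β' hβ'1 hβ'2
  have hVadm := isAdmissible_applyWord isAdmissible_Cfg0 hβ'1
  obtain ⟨hb1, hBW⟩ := bpos_glue hm hVadm (applyWord_Cfg0_top β') h1 h2 ha1 haL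
  rw [hBW, h1 (m + Bpos (applyWord Cfg0 β') a'), if_neg (by omega),
    show m + Bpos (applyWord Cfg0 β') a' - m = Bpos (applyWord Cfg0 β') a' by omega]

/-- If a word α of length ≥ 2 has a renovation event at some position n ≥ 2,
meaning α_{n+k} ≤ k+1 for all 0 ≤ k ≤ L(α) - n, then ε_X(α) = 0. -/
theorem eps_eq_zero_of_renovation (X : Config) (hX : IsAdmissible X) (α : List ℕ)
    (hα : ∀ a ∈ α, 1 ≤ a) (hlen : 2 ≤ α.length) (n : ℕ) (hn : 2 ≤ n)
    (hnl : n ≤ α.length)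
    (hren : ∀ k : ℕ, k ≤ α.length - n → α.getD (n + k - 1) 0 ≤ k + 1) :
    eps X α = 0 := by
  have hαsplit : α = α.take (n-1) ++ α.drop (n-1) := (List.take_append_drop _ _).symm
  set δ := α.take (n-1) with hδdef
  set β := α.drop (n-1) with hβdef
  have hδlen : δ.length = n - 1 := by
    rw [hδdef, List.length_take]
    omega
  have hβlen : β.length = α.length - (n-1) := by
    rw [hβdef, List.length_drop]
  have hne : β ≠ [] := by
    intro h
    rw [h] at hβlen
    simp at hβlen
    omega
  obtain ⟨β', a', hβ'⟩ := (List.eq_nil_or_concat β).resolve_left hne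
  rw [List.concat_eq_append] at hβ'
  have hgetβ : ∀ k : ℕ, β.getD k 0 = α.getD (n-1+k) 0 := by
    intro k
    rw [hβdef, List.getD_eq_getElem?_getD, List.getD_eq_getElem?_getD, List.getElem?_drop]
  have hrenβ : ∀ k : ℕ, k < β.length → β.getD k 0 ≤ k + 1 := by
    intro k hk
    rw [hgetβ]
    have h := hren k (by omega)
    rwa [show n + k - 1 = n - 1 + k by omega] at h
  have hβ'len : β.length = β'.length + 1 := by
    rw [hβ', List.length_append]
    simp
  have hβ'2 : ∀ k : ℕ, k < β'.length → β'.getD k 0 ≤ k + 1 := by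
    intro k hk
    have h := hrenβ k (by omega)
    rwa [hβ', List.getD_eq_getElem?_getD, List.getElem?_append_left hk,
      ← List.getD_eq_getElem?_getD] at h
  have ha'eq : a' = β.getD β'.length 0 := by
    rw [hβ', List.getD_eq_getElem?_getD, List.getElem?_concat_length]
    rfl
  have haL : a' ≤ β'.length + 1 := by
    rw [ha'eq]
    exact hrenβ β'.length (by omega)
  have hβmem : ∀ b ∈ β, b ∈ α := fun b hb => List.drop_subset _ _ (hβdef ▸ hb)
  have hδ1 : ∀ b ∈ δ, 1 ≤ b := fun b hb => hα b (List.take_subset _ _ (hδdef ▸ hb))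
  have hβ'1 : ∀ b ∈ β', 1 ≤ b := fun b hb =>
    hα b (hβmem b (by rw [hβ']; exact List.mem_append_left _ hb))
  have ha'1 : 1 ≤ a' := hα a' (hβmem a' (by rw [hβ']; simp))
  have hδtail1 : ∀ b ∈ δ.tail, 1 ≤ b := fun b hb => hδ1 b (List.mem_of_mem_tail hb)
  have hδne : δ ≠ [] := by
    intro h
    rw [h] at hδlen
    simp at hδlen
    omega
  have hαeq : α = δ ++ (β' ++ [a']) := by rw [← hβ']; exact hαsplit
  have htaileq : α.tail = δ.tail ++ (β' ++ [a']) := by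
    rw [hαeq, List.tail_append_of_ne_nil hδne]
  have e1 := inP_renov hX δ β' a' hδ1 hβ'1 hβ'2 ha'1 haL
  have e2 := inP_renov hX δ.tail β' a' hδtail1 hβ'1 hβ'2 ha'1 haL
  have h1 : inP X α ↔ inP X α.tail := by
    rw [htaileq, hαeq, e1, e2]
  rw [eps, if_congr h1 rfl rfl, sub_self]
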